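/- Let 𝔤 be the complex Lie algebra with ℂ-basis {L_m : m ∈ ℤ} and Lie bracket determined by {L_m, L_n} = (n − m)·L_{m+n} if m ≥ 2 and n ≥ 2; {L_m, L_n} = (m − n)·L_{m+n} if m ≤ 1 and n ≤ 1; and {L_m, L_n} = 0 if exactly one of m, n is ≥ 2. Let V be the ℂ-vector space with basis {v_n : n ∈ ℤ}. Then the bilinear action determined by L_m · v_n = (n − m)·v_{m+n} for m ≥ 2 and L_m · v_n = 0 for m ≤ 1 makes V a module over 𝔤, i.e. {x, y} · v = x · (y · v) − y · (x · v) for all x, y ∈ 𝔤 and v ∈ V. -/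

import Mathlib

noncomputable section

/-- The underlying space of the Witt algebra: the free ℂ-module on basis `{L m : m ∈ ℤ}`,
realized as finitely supported functions `ℤ →₀ ℂ`. -/
abbrev W : Type := ℤ →₀ ℂ

/-- The standard basis vector `L m`. -/
def L (m : ℤ) : W := Finsupp.single m 1

/-- `(W, br, mul)` is a post-Lie algebra: `br` plays the role of the Lie bracket `[·,·]`
and `mul` of the product `∘`, satisfying
`[x,y] ∘ z = x ∘ (y ∘ z) − y ∘ (x ∘ z) − ⟨x,y⟩ ∘ z` and
`x ∘ [y,z] = [x ∘ y, z] + [y, x ∘ z]`, where `⟨x,y⟩ = x ∘ y − y ∘ x`. -/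
def IsPostLie (br mul : W →ₗ[ℂ] W →ₗ[ℂ] W) : Prop :=
  (∀ x y z : W, mul (br x y) z =
      mul x (mul y z) - mul y (mul x z) - mul (mul x y - mul y x) z) ∧
  (∀ x y z : W, mul x (br y z) = br (mul x y) z + br y (mul x z))

/-- Equation (E). -/
def EqE (f : ℤ → ℂ) : Prop :=
  ∀ m n : ℤ,
    (m - n : ℂ) * (f (m + n) + f m * f (m + n) + f n * f (m + n) - f m * f n) = 0

/-- Equation (E2). -/
def EqE2 (ν : ℤ) (g : ℤ → ℂ) : Prop :=
  ∀ m n : ℤ,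
    (m - n : ℂ) * g m * g n =
      ((m - n + ν : ℂ) * g m + (m - n - ν : ℂ) * g n) * g (m + n + ν)

/-- Equation (E3). -/
def EqE3 (ν : ℤ) (f g : ℤ → ℂ) : Prop :=
  ∀ m n : ℤ,
    (m - n : ℂ) * (f m + f n + 1) * g (m + n) =
      (n - m + ν : ℂ) * (f (m + n + ν) - f m) * g n +
        (n - m - ν : ℂ) * (f (m + n + ν) - f n) * g m

theorem stmt19 (b : W →ₗ[ℂ] W →ₗ[ℂ] W)
    (hb₁ : ∀ m n : ℤ, 2 ≤ m → 2 ≤ n → b (L m) (L n) = (n - m : ℂ) • L (m + n))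
    (hb₂ : ∀ m n : ℤ, m ≤ 1 → n ≤ 1 → b (L m) (L n) = (m - n : ℂ) • L (m + n))
    (hb₃ : ∀ m n : ℤ, 2 ≤ m → n ≤ 1 → b (L m) (L n) = 0)
    (hb₄ : ∀ m n : ℤ, m ≤ 1 → 2 ≤ n → b (L m) (L n) = 0)
    (act : W →ₗ[ℂ] W →ₗ[ℂ] W)
    (hact₁ : ∀ m n : ℤ, 2 ≤ m → act (L m) (L n) = (n - m : ℂ) • L (m + n))
    (hact₂ : ∀ m n : ℤ, m ≤ 1 → act (L m) (L n) = 0) :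
    ∀ (x y : W) (v : W), act (b x y) v = act x (act y v) - act y (act x v) := by

  have key : ∀ m n p : ℤ, act (b (L m) (L n)) (L p) =
      act (L m) (act (L n) (L p)) - act (L n) (act (L m) (L p)) := by
    intro m n p
    rcases le_or_gt m 1 with hm | hm <;> rcases le_or_gt n 1 with hn | hn
    · rw [hb₂ m n hm hn, hact₂ m _ hm, hact₂ n _ hn, map_smul, LinearMap.smul_apply]
      rcases le_or_gt (m + n) 1 with h | h
      · rw [hact₂ _ _ h]; simp
      · have hm1 : m = 1 := by omega
        have hn1 : n = 1 := by omega
        simp [hm1, hn1]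
    · have hn2 : 2 ≤ n := by omega
      rw [hb₄ m n hm hn2, hact₁ n p hn2, map_smul, hact₂ m _ hm, hact₂ m _ hm]
      simp
    · have hm2 : 2 ≤ m := by omega
      rw [hb₃ m n hm2 hn, hact₁ m p hm2, map_smul, hact₂ n _ hn, hact₂ n _ hn]
      simp
    · have hm2 : 2 ≤ m := by omega
      have hn2 : 2 ≤ n := by omega
      rw [hb₁ m n hm2 hn2, map_smul, LinearMap.smul_apply, hact₁ (m + n) p (by omega),
          hact₁ n p hn2, map_smul, hact₁ m (n + p) hm2,
          hact₁ m p hm2, map_smul, hact₁ n (m + p) hn2,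
          smul_smul, smul_smul, smul_smul,
          show m + (n + p) = m + n + p by ring,
          show n + (m + p) = m + n + p by ring, ← sub_smul]
      congr 1
      push_cast
      ring
  have hsing : ∀ (a : ℤ) (c : ℂ), (Finsupp.single a c : W) = c • L a := by
    intro a c; rw [L, Finsupp.smul_single, smul_eq_mul, mul_one]
  intro x y v
  induction v using Finsupp.induction_linear with
  | zero => simp
  | add f g hf hg => simp only [map_add, hf, hg]; abel
  | single p c =>
    induction x using Finsupp.induction_linear with
    | zero => simp
    | add f g hf hg =>
      simp only [map_add, LinearMap.add_apply, hf, hg]; abel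
    | single m cm =>
      induction y using Finsupp.induction_linear with
      | zero => simp
      | add f g hf hg =>
        simp only [map_add, LinearMap.add_apply, hf, hg]; abel
      | single n cn =>
        rw [hsing, hsing, hsing]
        simp only [map_smul, LinearMap.smul_apply, key, smul_sub]
        module
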